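/- arXiv:2212.07209 — 3 statements merged into one kernel-verified Lean document; each statement's English description precedes it below -/
import Mathlib

section
/- (Proposition 1) For every fixed t_f ≥ 0, the value function ω(·,t_f) is Lipschitz continuous in the initial state: for all r₀, r̂₀ ∈ ℝ⁷, |ω(r₀,t_f) − ω(r̂₀,t_f)| ≤ max(L_g, L_ν) · e^{t_f·L_f} · ‖r₀ − r̂₀‖. -/
open Real MeasureTheory Set
open scoped Topology

noncomputable section

/-- The state space ℝ⁷. -/
abbrev St : Type := Fin 7 → ℝ

/-- The control value space ℝ³ (incidence angle, sideslip angle, thrust). -/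
abbrev Ctrl : Type := ℝ × ℝ × ℝ

/-- The compact control set U = [-π,π] × [-π/2,π/2] × [0,T_max]. -/
def ctrlSet (Tmax : ℝ) : Set Ctrl :=
  Icc (-π) π ×ˢ Icc (-(π / 2)) (π / 2) ×ˢ Icc 0 Tmax

/-- `(r, u)` is a trajectory-control pair on `[a, b]` starting at `r₀`:
`u` is a measurable policy with values in the control set, `r` is (absolutely)
continuous on `[a, b]`, `r a = r₀` and `r` solves `ṙ = f(r, u)` in integral form. -/
def IsTrajOn (f : St → Ctrl → St) (Tmax : ℝ) (r₀ : St) (a b : ℝ)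
    (r : ℝ → St) (u : ℝ → Ctrl) : Prop :=
  ContinuousOn r (Icc a b) ∧ Measurable u ∧ (∀ t, u t ∈ ctrlSet Tmax) ∧
  r a = r₀ ∧ ∀ t ∈ Icc a b, r t = r₀ + ∫ s in a..t, f (r s) (u s)

/-- `(r, u) ∈ Π_{r₀, t_f}`. -/
def IsTraj (f : St → Ctrl → St) (Tmax : ℝ) (r₀ : St) (tf : ℝ)
    (r : ℝ → St) (u : ℝ → Ctrl) : Prop :=
  IsTrajOn f Tmax r₀ (-tf) 0 r u

/-- The cost `max(ν(r(0)), max_{τ ∈ [-t_f, 0]} g(r(τ)))` of a trajectory. -/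
def trajCost (g ν : St → ℝ) (tf : ℝ) (r : ℝ → St) : ℝ :=
  max (ν (r 0)) (sSup ((fun τ => g (r τ)) '' Icc (-tf) 0))

/-- The value function ω(r₀, t_f). -/
def valueFn (f : St → Ctrl → St) (Tmax : ℝ) (g ν : St → ℝ) (r₀ : St) (tf : ℝ) : ℝ :=
  sInf {y | ∃ r u, IsTraj f Tmax r₀ tf r u ∧ y = trajCost g ν tf r}

/-- Proposition 1: for every fixed t_f ≥ 0, the value function
ω(·, t_f) is Lipschitz in the initial state with constant max(L_g, L_ν)·e^{t_f L_f}. -/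
theorem value_lipschitz
    (f : St → Ctrl → St) (Tmax : ℝ) (Lf Lg Lν : ℝ) (g ν : St → ℝ)
    (hLf : 0 < Lf)
    (hf_bdd : ∃ M, ∀ r u, ‖f r u‖ ≤ M)
    (hf_lip : ∀ r₁ r₂ u₁ u₂, u₁ ∈ ctrlSet Tmax → u₂ ∈ ctrlSet Tmax →
      ‖f r₁ u₁ - f r₂ u₂‖ ≤ Lf * ‖r₁ - r₂‖)
    (hg_lip : ∀ a b, |g a - g b| ≤ Lg * ‖a - b‖)
    (hν_lip : ∀ a b, |ν a - ν b| ≤ Lν * ‖a - b‖)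
    (hne : ∀ (r₀ : St) (tf : ℝ), 0 ≤ tf → ∃ r u, IsTraj f Tmax r₀ tf r u)
    (tf : ℝ) (htf : 0 ≤ tf) :
    ∀ r₀ rhat₀ : St,
      |valueFn f Tmax g ν r₀ tf - valueFn f Tmax g ν rhat₀ tf| ≤
        max Lg Lν * Real.exp (tf * Lf) * ‖r₀ - rhat₀‖ := by
  have hLf0 : (0:ℝ) ≤ Lf := hLf.le
  obtain ⟨M, hM⟩ := hf_bdd
  have hM0 : 0 ≤ M := (norm_nonneg _).trans (hM 0 0)
  obtain ⟨re, ue, hre⟩ := hne 0 0 le_rfl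
  set u₀ : Ctrl := ue 0 with hu₀def
  have hu₀ : u₀ ∈ ctrlSet Tmax := hre.2.2.1 0
  set F : St → St := fun x => f x u₀ with hFdef
  have hFeq : ∀ (x : St) (u : Ctrl), u ∈ ctrlSet Tmax → f x u = F x := by
    intro x u hu
    have h := hf_lip x x u u₀ hu hu₀
    rw [sub_self, norm_zero, mul_zero] at h
    exact sub_eq_zero.mp (norm_le_zero_iff.mp h)
  have hFlip : LipschitzWith (Real.toNNReal Lf) F := by
    apply LipschitzWith.of_dist_le_mul
    intro x y
    simp only [dist_eq_norm, Real.coe_toNNReal Lf hLf0]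
    exact hf_lip x y u₀ u₀ hu₀ hu₀
  have hFcont : Continuous F := hFlip.continuous
  have honeSt : ‖((fun _ => (1:ℝ)) : St) - (0 : St)‖ = 1 := by
    rw [sub_zero]
    simp
  have hLg0 : 0 ≤ Lg := by
    have h := (abs_nonneg _).trans (hg_lip (fun _ => 1) 0)
    rw [honeSt, mul_one] at h; exact h
  have hLν0 : 0 ≤ Lν := by
    have h := (abs_nonneg _).trans (hν_lip (fun _ => 1) 0)
    rw [honeSt, mul_one] at h; exact h
  have hgc : Continuous g := by
    have : LipschitzWith (Real.toNNReal Lg) g := LipschitzWith.of_dist_le_mul fun x y => by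
      simp only [Real.dist_eq, dist_eq_norm, Real.coe_toNNReal Lg hLg0]
      exact hg_lip x y
    exact this.continuous
  -- The key construction: for every trajectory from `y`, there is a trajectory from `x`
  -- (with the same control) that stays `‖x - y‖ e^{tf·Lf}`-close to it.
  have key : ∀ (x y : St) (r : ℝ → St) (u : ℝ → Ctrl), IsTraj f Tmax y tf r u →
      ∃ r' : ℝ → St, IsTraj f Tmax x tf r' u ∧
        ∀ t ∈ Icc (-tf) (0:ℝ), dist (r' t) (r t) ≤ ‖x - y‖ * Real.exp (tf * Lf) := by
    intro x y r u hr
    obtain ⟨hrc, hum, huS, hr0, hri⟩ := hr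
    have hGr : ContinuousOn (fun s => F (r s)) (Icc (-tf) 0) := hFcont.comp_continuousOn hrc
    -- Picard–Lindelöf existence of the solution from `x`
    have hpl : IsPicardLindelof (fun _ z => F z) (tmin := -tf) (tmax := 0)
        ⟨-tf, le_rfl, neg_nonpos.mpr htf⟩ x (M.toNNReal * tf.toNNReal) 0 M.toNNReal
        (Real.toNNReal Lf) := by
      apply IsPicardLindelof.of_time_independent
      · intro z _; rw [Real.coe_toNNReal M hM0]; exact hM z u₀
      · exact hFlip.lipschitzOnWith
      · have hmax : max (0 - -tf) (-tf - -tf) = tf := by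
          simp [htf]
        simp [hmax, Real.coe_toNNReal _ hM0, Real.coe_toNNReal _ htf]
        rw [max_eq_left htf]
    obtain ⟨r', hr'0, hr'd⟩ := hpl.exists_eq_forall_mem_Icc_hasDerivWithinAt₀
    have hr'0 : r' (-tf) = x := hr'0
    have hr'c : ContinuousOn r' (Icc (-tf) 0) := fun t ht => (hr'd t ht).continuousWithinAt
    have hGr' : ContinuousOn (fun s => F (r' s)) (Icc (-tf) 0) := hFcont.comp_continuousOn hr'c
    -- the constructed solution satisfies the integral equation
    have hr'i : ∀ t ∈ Icc (-tf) (0:ℝ), r' t = x + ∫ s in (-tf)..t, f (r' s) (u s) := by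
      intro t ht
      have heq : (∫ s in (-tf)..t, f (r' s) (u s)) = ∫ s in (-tf)..t, F (r' s) :=
        intervalIntegral.integral_congr fun s _ => hFeq _ _ (huS s)
      have hsub : Icc (-tf) t ⊆ Icc (-tf) 0 := Icc_subset_Icc le_rfl ht.2
      have hftc := intervalIntegral.integral_eq_sub_of_hasDeriv_right_of_le ht.1
        (hr'c.mono hsub)
        (fun s hs => (hr'd s ⟨hs.1.le, hs.2.le.trans ht.2⟩).mono_of_mem_nhdsWithin
          (Icc_mem_nhdsGT_of_mem ⟨hs.1.le, lt_of_lt_of_le hs.2 ht.2⟩))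
        ((hGr'.mono hsub).intervalIntegrable_of_Icc ht.1)
      rw [heq, hftc, hr'0]
      abel
    -- derivative statements needed for Grönwall
    have hr'dIci : ∀ s ∈ Ico (-tf) (0:ℝ), HasDerivWithinAt r' (F (r' s)) (Ici s) s :=
      fun s hs => (hr'd s ⟨hs.1, hs.2.le⟩).mono_of_mem_nhdsWithin (Icc_mem_nhdsGE_of_mem hs)
    have hrdIci : ∀ s ∈ Ico (-tf) (0:ℝ), HasDerivWithinAt r (F (r s)) (Ici s) s := by
      intro s hs
      have hint : IntervalIntegrable (fun τ => F (r τ)) volume (-tf) s :=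
        (hGr.mono (Icc_subset_Icc le_rfl hs.2.le)).intervalIntegrable_of_Icc hs.1
      have hmeas : StronglyMeasurableAtFilter (fun τ => F (r τ)) (𝓝[Set.Ioi s] s) volume :=
        ⟨Icc (-tf) 0, Icc_mem_nhdsGT_of_mem hs, hGr.aestronglyMeasurable measurableSet_Icc⟩
      have hcw : ContinuousWithinAt (fun τ => F (r τ)) (Set.Ioi s) s :=
        (hGr s ⟨hs.1, hs.2.le⟩).mono_of_mem_nhdsWithin (Icc_mem_nhdsGT_of_mem hs)
      have hd := intervalIntegral.integral_hasDerivWithinAt_right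
        (s := Set.Ici s) (t := Set.Ioi s) hint hmeas hcw
      have hd2 : HasDerivWithinAt (fun t' => y + ∫ τ in (-tf)..t', F (r τ)) (F (r s))
          (Ici s) s := hd.const_add y
      refine hd2.congr_of_eventuallyEq ?_ ?_
      · filter_upwards [Icc_mem_nhdsGE_of_mem hs] with τ hτ
        rw [hri τ hτ]
        congr 1
        exact intervalIntegral.integral_congr fun σ _ => hFeq _ _ (huS σ)
      · rw [hri s ⟨hs.1, hs.2.le⟩]
        congr 1
        exact intervalIntegral.integral_congr fun σ _ => hFeq _ _ (huS σ)
    -- Grönwall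
    have hgron := dist_le_of_trajectories_ODE (v := fun _ z => F z) (K := Real.toNNReal Lf)
      (δ := ‖x - y‖) (fun _ => hFlip) hr'c hr'dIci hrc hrdIci
      (by rw [hr'0, hr0, dist_eq_norm])
    refine ⟨r', ⟨hr'c, hum, huS, hr'0, hr'i⟩, ?_⟩
    intro t ht
    refine (hgron t ht).trans ?_
    apply mul_le_mul_of_nonneg_left _ (norm_nonneg _)
    rw [Real.exp_le_exp, Real.coe_toNNReal Lf hLf0]
    nlinarith [ht.1, ht.2]
  -- comparison of costs of close trajectories
  have hIccNe : (Icc (-tf) (0:ℝ)).Nonempty := nonempty_Icc.2 (neg_nonpos.2 htf)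
  have cost_le : ∀ (r r' : ℝ → St) (D : ℝ), 0 ≤ D →
      ContinuousOn r (Icc (-tf) 0) → ContinuousOn r' (Icc (-tf) 0) →
      (∀ t ∈ Icc (-tf) (0:ℝ), dist (r' t) (r t) ≤ D) →
      trajCost g ν tf r' ≤ trajCost g ν tf r + max Lg Lν * D := by
    intro r r' D hD hrc hr'c hd
    have hmaxnn : 0 ≤ max Lg Lν := le_trans hLg0 (le_max_left _ _)
    have hbound : ∀ (φ : St → ℝ) (Lφ : ℝ), 0 ≤ Lφ → Lφ ≤ max Lg Lν →
        (∀ a b : St, |φ a - φ b| ≤ Lφ * ‖a - b‖) →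
        ∀ t ∈ Icc (-tf) (0:ℝ), φ (r' t) ≤ φ (r t) + max Lg Lν * D := by
      intro φ Lφ hLφ hle hφ t ht
      have h1 : φ (r' t) - φ (r t) ≤ |φ (r' t) - φ (r t)| := le_abs_self _
      have h2 := hφ (r' t) (r t)
      have h4 : Lφ * ‖r' t - r t‖ ≤ max Lg Lν * D := by
        rw [← dist_eq_norm]
        exact mul_le_mul hle (hd t ht) dist_nonneg hmaxnn
      linarith
    rw [trajCost, trajCost]
    have hst : sSup ((fun τ => g (r' τ)) '' Icc (-tf) 0) ≤
        sSup ((fun τ => g (r τ)) '' Icc (-tf) 0) + max Lg Lν * D := by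
      refine csSup_le (hIccNe.image _) ?_
      rintro z ⟨τ, hτ, rfl⟩
      refine (hbound g Lg hLg0 (le_max_left _ _) hg_lip τ hτ).trans (add_le_add_left ?_ _)
      exact le_csSup (isCompact_Icc.bddAbove_image (hgc.comp_continuousOn hrc)) ⟨τ, hτ, rfl⟩
    have hν0 := hbound ν Lν hLν0 (le_max_right _ _) hν_lip 0 ⟨neg_nonpos.2 htf, le_rfl⟩
    exact max_le (le_trans hν0 (add_le_add_left (le_max_left _ _) _))
      (le_trans hst (add_le_add_left (le_max_right _ _) _))
  -- properties of the value sets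
  have hAne : ∀ x : St, {y | ∃ r u, IsTraj f Tmax x tf r u ∧ y = trajCost g ν tf r}.Nonempty := by
    intro x
    obtain ⟨r, u, hr⟩ := hne x tf htf
    exact ⟨trajCost g ν tf r, r, u, hr, rfl⟩
  have hAbdd : ∀ x : St,
      BddBelow {y | ∃ r u, IsTraj f Tmax x tf r u ∧ y = trajCost g ν tf r} := by
    intro x
    refine ⟨ν x - Lν * (M * tf), ?_⟩
    rintro b ⟨r, u, ⟨hrc, hum, huS, hr0, hri⟩, rfl⟩
    have hr0eq := hri 0 ⟨neg_nonpos.2 htf, le_rfl⟩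
    have hnormint : ‖r 0 - x‖ ≤ M * tf := by
      rw [hr0eq, add_sub_cancel_left]
      have h := intervalIntegral.norm_integral_le_of_norm_le_const (a := -tf) (b := 0) (C := M)
        (f := fun s => f (r s) (u s)) (fun s _ => hM _ _)
      have habs : |(0:ℝ) - -tf| = tf := by
        rw [zero_sub, abs_neg, abs_neg, abs_of_nonneg htf]
      rwa [habs] at h
    have h5 : ν x - ν (r 0) ≤ Lν * (M * tf) := by
      have h6 := (le_abs_self _).trans (hν_lip x (r 0))
      have h7 : Lν * ‖x - r 0‖ ≤ Lν * (M * tf) :=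
        mul_le_mul_of_nonneg_left (by rwa [norm_sub_rev]) hLν0
      linarith
    have h8 : ν (r 0) ≤ trajCost g ν tf r := by
      rw [trajCost]; exact le_max_left _ _
    linarith
  -- one-sided Lipschitz estimate
  have main : ∀ x y : St, valueFn f Tmax g ν x tf ≤
      valueFn f Tmax g ν y tf + max Lg Lν * Real.exp (tf * Lf) * ‖x - y‖ := by
    intro x y
    rw [valueFn, valueFn, ← sub_le_iff_le_add]
    refine le_csInf (hAne y) ?_
    rintro b ⟨r, u, hr, rfl⟩
    rw [sub_le_iff_le_add]
    obtain ⟨r', hr', hd⟩ := key x y r u hr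
    have h1 : sInf {y | ∃ r u, IsTraj f Tmax x tf r u ∧ y = trajCost g ν tf r} ≤
        trajCost g ν tf r' := csInf_le (hAbdd x) ⟨r', u, hr', rfl⟩
    have h2 := cost_le r r' (‖x - y‖ * Real.exp (tf * Lf))
      (mul_nonneg (norm_nonneg _) (Real.exp_nonneg _)) hr.1 hr'.1 hd
    calc sInf {y | ∃ r u, IsTraj f Tmax x tf r u ∧ y = trajCost g ν tf r}
        ≤ trajCost g ν tf r' := h1
      _ ≤ trajCost g ν tf r + max Lg Lν * (‖x - y‖ * Real.exp (tf * Lf)) := h2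
      _ = trajCost g ν tf r + max Lg Lν * Real.exp (tf * Lf) * ‖x - y‖ := by ring
  intro r₀ rhat₀
  rw [abs_sub_le_iff]
  constructor
  · linarith [main r₀ rhat₀]
  · have h := main rhat₀ r₀
    rw [norm_sub_rev rhat₀ r₀] at h
    linarith
end
end

section
/- (Proposition 2) For every fixed t_f ≥ 0, the auxiliary value function ϑ(·,t_f,·) is Lipschitz continuous: for all r₀, r̂₀ ∈ ℝ⁷ and z₀, ẑ₀ ∈ ℝ^p, |ϑ(r₀,t_f,z₀) − ϑ(r̂₀,t_f,ẑ₀)| ≤ C_r·‖r₀ − r̂₀‖ + ‖z₀ − ẑ₀‖, where C_r = max( L_g·e^{t_f·L_f}, L_ν·e^{t_f·L_f}, L_t·e^{t_f·L_f} + L_r·(e^{t_f·L_f} − 1)/L_f ). -/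
open Real MeasureTheory Set

noncomputable section

/-- `z` is the auxiliary state on `[-t_f, 0]` with `ż(s) = −J_r(r(s), u(s))` a.e.
and terminal condition `z(0) = z₀`, encoded in integral form. -/
def IsAux {p : ℕ} (Jr : St → Ctrl → Fin p → ℝ) (tf : ℝ)
    (r : ℝ → St) (u : ℝ → Ctrl) (z₀ : Fin p → ℝ) (z : ℝ → Fin p → ℝ) : Prop :=
  ContinuousOn z (Icc (-tf) 0) ∧ z 0 = z₀ ∧
  ∀ t ∈ Icc (-tf) 0, z t = z₀ + ∫ s in t..0, Jr (r s) (u s)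

/-- The cost `max( max_i [J_t^i(r(0)) − z^i(−t_f)], ν(r(0)), max_{s∈[-t_f,0]} g(r(s)) )`. -/
def auxCost {p : ℕ} (g ν : St → ℝ) (Jt : St → Fin p → ℝ) (tf : ℝ)
    (r : ℝ → St) (z : ℝ → Fin p → ℝ) : ℝ :=
  max (⨆ i, (Jt (r 0) i - z (-tf) i))
    (max (ν (r 0)) (sSup ((fun s => g (r s)) '' Icc (-tf) 0)))

/-- The auxiliary value function ϑ(r₀, t_f, z₀). -/
def auxValueFn {p : ℕ} (f : St → Ctrl → St) (Tmax : ℝ) (g ν : St → ℝ)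
    (Jt : St → Fin p → ℝ) (Jr : St → Ctrl → Fin p → ℝ)
    (r₀ : St) (tf : ℝ) (z₀ : Fin p → ℝ) : ℝ :=
  sInf {y | ∃ r u z, IsTraj f Tmax r₀ tf r u ∧ IsAux Jr tf r u z₀ z ∧
    y = auxCost g ν Jt tf r z}

lemma my_gronwall {E : Type*} [NormedAddCommGroup E] [NormedSpace ℝ E] [CompleteSpace E]
    {F : E → E} {K : ℝ} (hK : 0 ≤ K) (hF : ∀ x y, ‖F x - F y‖ ≤ K * ‖x - y‖)
    {a b : ℝ} {r₁ r₂ : ℝ → E} (h₁ : Continuous r₁) (h₂ : Continuous r₂)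
    (e₁ : ∀ t ∈ Icc a b, r₁ t = r₁ a + ∫ s in a..t, F (r₁ s))
    (e₂ : ∀ t ∈ Icc a b, r₂ t = r₂ a + ∫ s in a..t, F (r₂ s)) :
    ∀ t ∈ Icc a b, ‖r₁ t - r₂ t‖ ≤ ‖r₁ a - r₂ a‖ * Real.exp (K * (t - a)) := by
  have hFc : Continuous F := by
    have : LipschitzWith (Real.toNNReal K) F := by
      apply LipschitzWith.of_dist_le_mul
      intro x y
      rw [dist_eq_norm, dist_eq_norm, Real.coe_toNNReal K hK]
      exact hF x y
    exact this.continuous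
  set G : ℝ → E := fun s => F (r₁ s) - F (r₂ s) with hGdef
  have hGc : Continuous G := (hFc.comp h₁).sub (hFc.comp h₂)
  set w : ℝ → E := fun t => (r₁ a - r₂ a) + ∫ s in a..t, G s with hwdef
  have hwd : ∀ t, HasDerivAt w (G t) t := by
    intro t
    exact (intervalIntegral.integral_hasDerivAt_right
      (hGc.intervalIntegrable a t)
      (hGc.stronglyMeasurableAtFilter volume (nhds t))
      hGc.continuousAt).const_add _
  have hww : ∀ t ∈ Icc a b, w t = r₁ t - r₂ t := by
    intro t ht
    have i₁ : IntervalIntegrable (fun s => F (r₁ s)) volume a t := (hFc.comp h₁).intervalIntegrable a t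
    have i₂ : IntervalIntegrable (fun s => F (r₂ s)) volume a t := (hFc.comp h₂).intervalIntegrable a t
    rw [hwdef]
    simp only [hGdef]
    rw [intervalIntegral.integral_sub i₁ i₂, e₁ t ht, e₂ t ht]
    abel
  have hcont : ContinuousOn w (Icc a b) := by
    apply Continuous.continuousOn
    exact continuous_const.add
      (intervalIntegral.continuous_primitive (fun c d => hGc.intervalIntegrable c d) a)
  have key := norm_le_gronwallBound_of_norm_deriv_right_le (f := w) (f' := G)
    (δ := ‖r₁ a - r₂ a‖) (K := K) (ε := 0) (a := a) (b := b)
    hcont (fun t _ => (hwd t).hasDerivWithinAt)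
    (by simp [hwdef])
    (by
      intro t ht
      have htI : t ∈ Icc a b := ⟨ht.1, le_of_lt ht.2⟩
      rw [hww t htI]
      simpa using hF (r₁ t) (r₂ t))
  intro t ht
  have := key t ht
  rw [hww t ht] at this
  rwa [gronwallBound_ε0] at this

section main

variable (p : ℕ) (hp : 0 < p)
    (f : St → Ctrl → St) (Tmax : ℝ) (Lf Lg Lν Lt Lr : ℝ) (g ν : St → ℝ)
    (Jt : St → Fin p → ℝ) (Jr : St → Ctrl → Fin p → ℝ)

/-- One-sided Lipschitz estimate for the auxiliary value function. -/
lemma auxValue_le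
    (hp : 0 < p)
    (hLf : 0 < Lf)
    (hf_bdd : ∃ M, ∀ r u, ‖f r u‖ ≤ M)
    (hf_lip : ∀ r₁ r₂ u₁ u₂, u₁ ∈ ctrlSet Tmax → u₂ ∈ ctrlSet Tmax →
      ‖f r₁ u₁ - f r₂ u₂‖ ≤ Lf * ‖r₁ - r₂‖)
    (hg_lip : ∀ a b, |g a - g b| ≤ Lg * ‖a - b‖)
    (hν_lip : ∀ a b, |ν a - ν b| ≤ Lν * ‖a - b‖)
    (hJt_lip : ∀ a b, ‖Jt a - Jt b‖ ≤ Lt * ‖a - b‖)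
    (hJr_cont : ContinuousOn (fun q : St × Ctrl => Jr q.1 q.2) (univ ×ˢ ctrlSet Tmax))
    (hJr_lip : ∀ a b c, c ∈ ctrlSet Tmax → ‖Jr a c - Jr b c‖ ≤ Lr * ‖a - b‖)
    (hne : ∀ (r₀ : St) (tf : ℝ) (z₀ : Fin p → ℝ), 0 ≤ tf →
      ∃ r u z, IsTraj f Tmax r₀ tf r u ∧ IsAux Jr tf r u z₀ z)
    (tf : ℝ) (htf : 0 ≤ tf) :
        ∀ (r₀ rhat₀ : St) (z₀ zhat₀ : Fin p → ℝ),
      auxValueFn f Tmax g ν Jt Jr r₀ tf z₀ ≤ auxValueFn f Tmax g ν Jt Jr rhat₀ tf zhat₀ +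
        (max (Lg * Real.exp (tf * Lf))
          (max (Lν * Real.exp (tf * Lf))
            (Lt * Real.exp (tf * Lf) + Lr * (Real.exp (tf * Lf) - 1) / Lf)) *
          ‖r₀ - rhat₀‖ + ‖z₀ - zhat₀‖) := by
  intro r₀ rhat₀ z₀ zhat₀
  obtain ⟨M, hM⟩ := hf_bdd
  have hM0 : 0 ≤ M := le_trans (norm_nonneg _) (hM 0 (0, 0, 0))
  have ha0 : (-tf) ≤ 0 := neg_nonpos.mpr htf
  have hmem_tf : (-tf) ∈ Icc (-tf) 0 := left_mem_Icc.mpr ha0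
  have hmem0 : (0 : ℝ) ∈ Icc (-tf) 0 := right_mem_Icc.mpr ha0
  have hx1 : ‖(fun _ => (1 : ℝ) : St)‖ = 1 := by
    rw [pi_norm_const (1 : ℝ), norm_one]
  have hnorm01 : ‖(0 : St) - (fun _ => (1 : ℝ))‖ = 1 := by
    rw [zero_sub, norm_neg, hx1]
  have hLν0 : 0 ≤ Lν := by
    have h := hν_lip 0 (fun _ => 1)
    rw [hnorm01, mul_one] at h
    exact le_trans (abs_nonneg _) h
  have hLg0 : 0 ≤ Lg := by
    have h := hg_lip 0 (fun _ => 1)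
    rw [hnorm01, mul_one] at h
    exact le_trans (abs_nonneg _) h
  have hLt0 : 0 ≤ Lt := by
    have h := hJt_lip 0 (fun _ => 1)
    rw [hnorm01, mul_one] at h
    exact le_trans (norm_nonneg _) h
  set e : ℝ := Real.exp (tf * Lf) with hedef
  set C : ℝ := max (Lg * e) (max (Lν * e) (Lt * e + Lr * (e - 1) / Lf)) with hCdef
  set δr : ℝ := ‖r₀ - rhat₀‖ with hδr
  set δz : ℝ := ‖z₀ - zhat₀‖ with hδz
  have hδr0 : 0 ≤ δr := norm_nonneg _
  have hδz0 : 0 ≤ δz := norm_nonneg _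
  set S : Set ℝ := {y | ∃ r u z, IsTraj f Tmax r₀ tf r u ∧ IsAux Jr tf r u z₀ z ∧
    y = auxCost g ν Jt tf r z} with hSdef
  set Sh : Set ℝ := {y | ∃ r u z, IsTraj f Tmax rhat₀ tf r u ∧ IsAux Jr tf r u zhat₀ z ∧
    y = auxCost g ν Jt tf r z} with hShdef
  have hShne : Sh.Nonempty := by
    obtain ⟨r, u, z, h1, h2⟩ := hne rhat₀ tf zhat₀ htf
    exact ⟨_, r, u, z, h1, h2, rfl⟩
  have hSbdd : BddBelow S := by
    refine ⟨ν r₀ - Lν * (M * tf), ?_⟩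
    rintro y ⟨r, u, z, hT, hA, rfl⟩
    have hr0 : r 0 = r₀ + ∫ s in (-tf)..0, f (r s) (u s) := hT.2.2.2.2 0 hmem0
    have hb : ‖r 0 - r₀‖ ≤ M * tf := by
      rw [hr0, add_sub_cancel_left]
      have := intervalIntegral.norm_integral_le_of_norm_le_const
        (a := -tf) (b := 0) (C := M) (f := fun s => f (r s) (u s)) (fun x _ => hM _ _)
      calc ‖∫ s in (-tf)..0, f (r s) (u s)‖ ≤ M * |0 - (-tf)| := this
        _ = M * tf := by rw [zero_sub, abs_neg, abs_neg, abs_of_nonneg htf]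
    have hν1 : ν r₀ - Lν * (M * tf) ≤ ν (r 0) := by
      have h1 := (le_abs_self _).trans (hν_lip r₀ (r 0))
      rw [norm_sub_rev] at h1
      have h2 : Lν * ‖r 0 - r₀‖ ≤ Lν * (M * tf) := mul_le_mul_of_nonneg_left hb hLν0
      linarith
    calc ν r₀ - Lν * (M * tf) ≤ ν (r 0) := hν1
      _ ≤ max (ν (r 0)) (sSup ((fun s => g (r s)) '' Icc (-tf) 0)) := le_max_left _ _
      _ ≤ auxCost g ν Jt tf r z := le_max_right _ _
  have main : ∀ y ∈ Sh, sInf S ≤ y + (C * δr + δz) := by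
    rintro yh ⟨rh, uh, zh, hTh, hAh, hyh_eq⟩
    obtain ⟨r, u', z', hTr, -⟩ := hne r₀ tf z₀ htf
    set c₀ : Ctrl := uh 0 with hc₀def
    have hc₀ : c₀ ∈ ctrlSet Tmax := hTh.2.2.1 0
    have hLr0 : 0 ≤ Lr := by
      have h := hJr_lip 0 (fun _ => 1) c₀ hc₀
      rw [hnorm01, mul_one] at h
      exact le_trans (norm_nonneg _) h
    have f_const : ∀ (x : St) (c : Ctrl), c ∈ ctrlSet Tmax → f x c = f x c₀ := by
      intro x c hc
      have h := hf_lip x x c c₀ hc hc₀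
      simp only [sub_self, norm_zero, mul_zero] at h
      exact sub_eq_zero.mp (norm_le_zero_iff.mp h)
    set F : St → St := fun x => f x c₀ with hFdef
    have hFlip : ∀ x y, ‖F x - F y‖ ≤ Lf * ‖x - y‖ := fun x y => hf_lip x y c₀ c₀ hc₀ hc₀
    set r' : ℝ → St := fun t => r (projIcc (-tf) 0 ha0 t) with hr'def
    set rh' : ℝ → St := fun t => rh (projIcc (-tf) 0 ha0 t) with hrh'def
    have hr'eq : ∀ t ∈ Icc (-tf) 0, r' t = r t := by
      intro t ht; rw [hr'def]; simp only; rw [projIcc_of_mem ha0 ht]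
    have hrh'eq : ∀ t ∈ Icc (-tf) 0, rh' t = rh t := by
      intro t ht; rw [hrh'def]; simp only; rw [projIcc_of_mem ha0 ht]
    have hr'c : Continuous r' :=
      hTr.1.comp_continuous (continuous_subtype_val.comp continuous_projIcc)
        (fun x => (projIcc (-tf) 0 ha0 x).2)
    have hrh'c : Continuous rh' :=
      hTh.1.comp_continuous (continuous_subtype_val.comp continuous_projIcc)
        (fun x => (projIcc (-tf) 0 ha0 x).2)
    have mkeq : ∀ (q : ℝ → St) (v : ℝ → Ctrl) (q₀ : St), IsTrajOn f Tmax q₀ (-tf) 0 q v →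
        ∀ t ∈ Icc (-tf) 0, (fun s => q (projIcc (-tf) 0 ha0 s)) t
          = (fun s => q (projIcc (-tf) 0 ha0 s)) (-tf)
            + ∫ s in (-tf)..t, F ((fun s' => q (projIcc (-tf) 0 ha0 s')) s) := by
      intro q v q₀ hq t ht
      have hqe : ∀ s ∈ Icc (-tf) 0, q (projIcc (-tf) 0 ha0 s) = q s := by
        intro s hs; rw [projIcc_of_mem ha0 hs]
      simp only
      rw [hqe t ht, hqe (-tf) hmem_tf, hq.2.2.2.1, hq.2.2.2.2 t ht]
      congr 1
      apply intervalIntegral.integral_congr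
      intro s hs
      rw [uIcc_of_le ht.1] at hs
      have hs' : s ∈ Icc (-tf) 0 := ⟨hs.1, le_trans hs.2 ht.2⟩
      simp only
      rw [hqe s hs', f_const (q s) (v s) (hq.2.2.1 s)]
    have e₁ := mkeq r u' r₀ hTr
    have e₂ := mkeq rh uh rhat₀ hTh
    have hGr : ∀ t ∈ Icc (-tf) 0, ‖r' t - rh' t‖ ≤ δr * Real.exp (Lf * (t + tf)) := by
      have h := my_gronwall (le_of_lt hLf) hFlip hr'c hrh'c e₁ e₂
      intro t ht
      have h2 := h t ht
      rw [hr'eq (-tf) hmem_tf, hrh'eq (-tf) hmem_tf, hTr.2.2.2.1, hTh.2.2.2.1] at h2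
      rw [sub_neg_eq_add] at h2
      exact h2
    have hGr0 : ∀ t ∈ Icc (-tf) 0, ‖r' t - rh' t‖ ≤ δr * e := by
      intro t ht
      refine le_trans (hGr t ht) (mul_le_mul_of_nonneg_left ?_ hδr0)
      rw [hedef]
      apply Real.exp_le_exp.mpr
      nlinarith [ht.2]
    have hTr2 : IsTraj f Tmax r₀ tf r uh := by
      refine ⟨hTr.1, hTh.2.1, hTh.2.2.1, hTr.2.2.2.1, ?_⟩
      intro t ht
      rw [hTr.2.2.2.2 t ht]
      congr 1
      apply intervalIntegral.integral_congr
      intro s _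
      simp only
      rw [f_const (r s) (u' s) (hTr.2.2.1 s), f_const (r s) (uh s) (hTh.2.2.1 s)]
    set h1 : ℝ → (Fin p → ℝ) := fun s => Jr (r' s) (uh s) with hh1def
    set h2 : ℝ → (Fin p → ℝ) := fun s => Jr (rh' s) (uh s) with hh2def
    have hmeasgen : ∀ (q : ℝ → St), Continuous q → Measurable (fun s => Jr (q s) (uh s)) := by
      intro q hq
      have hφ : Measurable (fun s => (⟨(q s, uh s), ⟨mem_univ _, hTh.2.2.1 s⟩⟩ :
          (univ ×ˢ ctrlSet Tmax : Set (St × Ctrl)))) :=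
        (hq.measurable.prodMk hTh.2.1).subtype_mk
      have hrestr : Continuous ((univ ×ˢ ctrlSet Tmax : Set (St × Ctrl)).restrict
          (fun q : St × Ctrl => Jr q.1 q.2)) := continuousOn_iff_continuous_restrict.mp hJr_cont
      exact hrestr.measurable.comp hφ
    obtain ⟨B, hB⟩ := isCompact_Icc.exists_bound_of_continuousOn hTr.1
    obtain ⟨Bh, hBh⟩ := isCompact_Icc.exists_bound_of_continuousOn hTh.1
    have hctrl_cpt : IsCompact (ctrlSet Tmax) :=
      (isCompact_Icc.prod (isCompact_Icc.prod isCompact_Icc))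
    have hJr0cont : ContinuousOn (fun c : Ctrl => Jr 0 c) (ctrlSet Tmax) := by
      have h := hJr_cont.comp
        (Continuous.continuousOn (continuous_const.prodMk continuous_id) :
          ContinuousOn (fun c : Ctrl => ((0 : St), c)) (ctrlSet Tmax))
        (fun c hc => ⟨mem_univ _, hc⟩)
      exact h
    obtain ⟨C₀, hC₀⟩ := hctrl_cpt.exists_bound_of_continuousOn hJr0cont
    have hIntOn : ∀ (q : ℝ → St) (Bq : ℝ), Continuous q → (∀ s, ‖q s‖ ≤ Bq) →
        IntegrableOn (fun s => Jr (q s) (uh s)) (Icc (-tf) 0) volume := by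
      intro q Bq hqc hqB
      apply Integrable.mono' (g := fun _ => Lr * Bq + C₀)
        (integrableOn_const measure_Icc_lt_top.ne)
        ((hmeasgen q hqc).aestronglyMeasurable)
      apply ae_of_all
      intro s
      calc ‖Jr (q s) (uh s)‖
          = ‖(Jr (q s) (uh s) - Jr 0 (uh s)) + Jr 0 (uh s)‖ := by rw [sub_add_cancel]
        _ ≤ ‖Jr (q s) (uh s) - Jr 0 (uh s)‖ + ‖Jr 0 (uh s)‖ := norm_add_le _ _
        _ ≤ Lr * ‖q s - 0‖ + C₀ :=
            add_le_add (hJr_lip _ _ _ (hTh.2.2.1 s)) (hC₀ _ (hTh.2.2.1 s))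
        _ ≤ Lr * Bq + C₀ := by
            rw [sub_zero]
            exact add_le_add_left (mul_le_mul_of_nonneg_left (hqB s) hLr0) _
    have hInt1 : IntegrableOn h1 (Icc (-tf) 0) volume :=
      hIntOn r' B hr'c (fun s => hB _ (projIcc (-tf) 0 ha0 s).2)
    have hInt2 : IntegrableOn h2 (Icc (-tf) 0) volume :=
      hIntOn rh' Bh hrh'c (fun s => hBh _ (projIcc (-tf) 0 ha0 s).2)
    have hII1 : ∀ t ∈ Icc (-tf) 0, IntervalIntegrable h1 volume t 0 := by
      intro t ht
      apply IntegrableOn.intervalIntegrable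
      rw [uIcc_of_le ht.2]
      exact hInt1.mono_set (Icc_subset_Icc ht.1 le_rfl)
    have hII2 : ∀ t ∈ Icc (-tf) 0, IntervalIntegrable h2 volume t 0 := by
      intro t ht
      apply IntegrableOn.intervalIntegrable
      rw [uIcc_of_le ht.2]
      exact hInt2.mono_set (Icc_subset_Icc ht.1 le_rfl)
    set z : ℝ → Fin p → ℝ := fun t => z₀ + ∫ s in t..0, h1 s with hzdef
    have hAux2 : IsAux Jr tf r uh z₀ z := by
      refine ⟨?_, by simp [hzdef], ?_⟩
      · apply ContinuousOn.add continuousOn_const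
        have h := intervalIntegral.continuousOn_primitive_interval_left
          (f := h1) (μ := volume) (a := -tf) (b := 0)
          (by rw [uIcc_of_le ha0]; exact hInt1)
        rw [uIcc_of_le ha0] at h
        exact h
      · intro t ht
        rw [hzdef]
        simp only
        congr 1
        apply intervalIntegral.integral_congr
        intro s hs
        rw [uIcc_of_le ht.2] at hs
        have hs' : s ∈ Icc (-tf) 0 := ⟨le_trans ht.1 hs.1, hs.2⟩
        simp only [hh1def]
        rw [hr'eq s hs']
    have hyS : auxCost g ν Jt tf r z ∈ S := ⟨r, uh, z, hTr2, hAux2, rfl⟩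
    -- endpoint estimates
    have hr0 : ‖r 0 - rh 0‖ ≤ δr * e := by
      rw [← hr'eq 0 hmem0, ← hrh'eq 0 hmem0]
      exact hGr0 0 hmem0
    have hzh_tf : zh (-tf) = zhat₀ + ∫ s in (-tf)..0, h2 s := by
      rw [hAh.2.2 (-tf) hmem_tf]
      congr 1
      apply intervalIntegral.integral_congr
      intro s hs
      rw [uIcc_of_le ha0] at hs
      simp only [hh2def]
      rw [hrh'eq s hs]
    have hexpint : ∫ s in (-tf)..0, Real.exp (Lf * s + Lf * tf) = (e - 1) / Lf := by
      rw [intervalIntegral.integral_comp_mul_add Real.exp (ne_of_gt hLf) (Lf * tf),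
        show Lf * -tf + Lf * tf = 0 by ring, show Lf * 0 + Lf * tf = tf * Lf by ring,
        integral_exp, Real.exp_zero, ← hedef, smul_eq_mul]
      ring
    have hzdiff : ‖z (-tf) - zh (-tf)‖ ≤ δz + Lr * δr * ((e - 1) / Lf) := by
      have hzv : z (-tf) = z₀ + ∫ s in (-tf)..0, h1 s := rfl
      have hsub : z (-tf) - zh (-tf) = (z₀ - zhat₀) + ∫ s in (-tf)..0, (h1 s - h2 s) := by
        rw [hzv, hzh_tf, intervalIntegral.integral_sub (hII1 _ hmem_tf) (hII2 _ hmem_tf)]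
        abel
      rw [hsub]
      refine le_trans (norm_add_le _ _) ?_
      have hb1 : ‖∫ s in (-tf)..0, (h1 s - h2 s)‖ ≤ ∫ s in (-tf)..0, ‖h1 s - h2 s‖ :=
        intervalIntegral.norm_integral_le_integral_norm ha0
      have hb2 : ∫ s in (-tf)..0, ‖h1 s - h2 s‖
          ≤ ∫ s in (-tf)..0, (Lr * δr) * Real.exp (Lf * s + Lf * tf) := by
        apply intervalIntegral.integral_mono_on ha0
          ((hII1 _ hmem_tf).sub (hII2 _ hmem_tf)).norm
          ((continuous_const.mul (Real.continuous_exp.comp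
            ((continuous_const.mul continuous_id).add continuous_const))).intervalIntegrable _ _)
        intro s hs
        have hlip := hJr_lip (r' s) (rh' s) (uh s) (hTh.2.2.1 s)
        have hgr := hGr s hs
        calc ‖h1 s - h2 s‖ ≤ Lr * ‖r' s - rh' s‖ := hlip
          _ ≤ Lr * (δr * Real.exp (Lf * (s + tf))) := mul_le_mul_of_nonneg_left hgr hLr0
          _ = (Lr * δr) * Real.exp (Lf * s + Lf * tf) := by rw [mul_add]; ring
      have hb3 : ∫ s in (-tf)..0, (Lr * δr) * Real.exp (Lf * s + Lf * tf)
          = Lr * δr * ((e - 1) / Lf) := by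
        rw [intervalIntegral.integral_const_mul, hexpint]
      have : ‖z₀ - zhat₀‖ = δz := rfl
      linarith [le_trans hb1 (le_trans hb2 (le_of_eq hb3))]
    -- the three comparisons
    have hC1 : Lg * e ≤ C := le_max_left _ _
    have hC2 : Lν * e ≤ C := le_trans (le_max_left _ _) (le_max_right _ _)
    have hC3 : Lt * e + Lr * (e - 1) / Lf ≤ C := le_trans (le_max_right _ _) (le_max_right _ _)
    have hBν : ν (r 0) ≤ ν (rh 0) + (C * δr + δz) := by
      have k0 := (le_abs_self _).trans (hν_lip (r 0) (rh 0))
      have k1 : Lν * ‖r 0 - rh 0‖ ≤ Lν * (δr * e) := mul_le_mul_of_nonneg_left hr0 hLν0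
      have k2 : Lν * (δr * e) ≤ C * δr := by
        calc Lν * (δr * e) = (Lν * e) * δr := by ring
          _ ≤ C * δr := mul_le_mul_of_nonneg_right hC2 hδr0
      linarith
    have hgc : Continuous g := by
      have : LipschitzWith (Real.toNNReal Lg) g := by
        apply LipschitzWith.of_dist_le_mul
        intro x y
        rw [Real.dist_eq, dist_eq_norm, Real.coe_toNNReal Lg hLg0]
        exact hg_lip x y
      exact this.continuous
    have himgne : ((fun s => g (r s)) '' Icc (-tf) 0).Nonempty :=
      ⟨_, mem_image_of_mem _ hmem0⟩
    have hbddh : BddAbove ((fun s => g (rh s)) '' Icc (-tf) 0) :=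
      (isCompact_Icc.image_of_continuousOn (hgc.comp_continuousOn hTh.1)).bddAbove
    have hBsup : sSup ((fun s => g (r s)) '' Icc (-tf) 0)
        ≤ sSup ((fun s => g (rh s)) '' Icc (-tf) 0) + (C * δr + δz) := by
      apply csSup_le himgne
      rintro x ⟨s, hs, rfl⟩
      have hnb : ‖r s - rh s‖ ≤ δr * e := by
        rw [← hr'eq s hs, ← hrh'eq s hs]
        exact hGr0 s hs
      have k0 := (le_abs_self _).trans (hg_lip (r s) (rh s))
      have k1 : Lg * ‖r s - rh s‖ ≤ Lg * (δr * e) := mul_le_mul_of_nonneg_left hnb hLg0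
      have k2 : Lg * (δr * e) ≤ C * δr := by
        calc Lg * (δr * e) = (Lg * e) * δr := by ring
          _ ≤ C * δr := mul_le_mul_of_nonneg_right hC1 hδr0
      have hle := le_csSup hbddh (mem_image_of_mem (fun s => g (rh s)) hs)
      linarith
    have hnep : Nonempty (Fin p) := ⟨⟨0, hp⟩⟩
    have hJtb : ‖Jt (r 0) - Jt (rh 0)‖ ≤ Lt * (δr * e) :=
      le_trans (hJt_lip _ _) (mul_le_mul_of_nonneg_left hr0 hLt0)
    have hAsup : (⨆ i, (Jt (r 0) i - z (-tf) i))
        ≤ (⨆ i, (Jt (rh 0) i - zh (-tf) i)) + (C * δr + δz) := by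
      apply ciSup_le
      intro i
      have k1 : Jt (r 0) i - Jt (rh 0) i ≤ ‖Jt (r 0) - Jt (rh 0)‖ := by
        have h := norm_le_pi_norm (Jt (r 0) - Jt (rh 0)) i
        rw [Pi.sub_apply, Real.norm_eq_abs] at h
        exact le_trans (le_abs_self _) h
      have k2 : zh (-tf) i - z (-tf) i ≤ ‖z (-tf) - zh (-tf)‖ := by
        have h := norm_le_pi_norm (z (-tf) - zh (-tf)) i
        rw [Pi.sub_apply, Real.norm_eq_abs] at h
        have := neg_abs_le (z (-tf) i - zh (-tf) i)
        linarith [abs_le.mp (le_trans (le_refl _) h)]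
      have k3 : Jt (rh 0) i - zh (-tf) i ≤ ⨆ j, (Jt (rh 0) j - zh (-tf) j) :=
        le_ciSup (f := fun j => Jt (rh 0) j - zh (-tf) j)
          (Set.Finite.bddAbove (finite_range _)) i
      have k4 : (Lt * e + Lr * (e - 1) / Lf) * δr ≤ C * δr :=
        mul_le_mul_of_nonneg_right hC3 hδr0
      have k5 : Lt * (δr * e) + (δz + Lr * δr * ((e - 1) / Lf)) ≤ C * δr + δz := by
        have hring : (Lt * e + Lr * (e - 1) / Lf) * δr
            = Lt * (δr * e) + Lr * δr * ((e - 1) / Lf) := by ring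
        linarith [k4, hring]
      linarith [hzdiff, hJtb]
    have hcost : auxCost g ν Jt tf r z ≤ auxCost g ν Jt tf rh zh + (C * δr + δz) := by
      unfold auxCost
      apply max_le
      · exact le_trans hAsup (add_le_add_left (le_max_left _ _) _)
      · apply max_le
        · exact le_trans hBν
            (add_le_add_left (le_trans (le_max_left _ _) (le_max_right _ _)) _)
        · exact le_trans hBsup
            (add_le_add_left (le_trans (le_max_right _ _) (le_max_right _ _)) _)
    calc sInf S ≤ auxCost g ν Jt tf r z := csInf_le hSbdd hyS
      _ ≤ auxCost g ν Jt tf rh zh + (C * δr + δz) := hcost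
      _ = yh + (C * δr + δz) := by rw [hyh_eq]
  have hval1 : auxValueFn f Tmax g ν Jt Jr r₀ tf z₀ = sInf S := rfl
  have hval2 : auxValueFn f Tmax g ν Jt Jr rhat₀ tf zhat₀ = sInf Sh := rfl
  rw [hval1, hval2]
  have h2 : sInf S - (C * δr + δz) ≤ sInf Sh :=
    le_csInf hShne (fun y hy => by linarith [main y hy])
  linarith

end main

/-- Proposition 2: Lipschitz continuity of the auxiliary value function. -/
theorem auxValue_lipschitz
    (p : ℕ) (hp : 0 < p)
    (f : St → Ctrl → St) (Tmax : ℝ) (Lf Lg Lν Lt Lr : ℝ) (g ν : St → ℝ)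
    (Jt : St → Fin p → ℝ) (Jr : St → Ctrl → Fin p → ℝ)
    (hLf : 0 < Lf)
    (hf_bdd : ∃ M, ∀ r u, ‖f r u‖ ≤ M)
    (hf_lip : ∀ r₁ r₂ u₁ u₂, u₁ ∈ ctrlSet Tmax → u₂ ∈ ctrlSet Tmax →
      ‖f r₁ u₁ - f r₂ u₂‖ ≤ Lf * ‖r₁ - r₂‖)
    (hg_lip : ∀ a b, |g a - g b| ≤ Lg * ‖a - b‖)
    (hν_lip : ∀ a b, |ν a - ν b| ≤ Lν * ‖a - b‖)
    (hJt_lip : ∀ a b, ‖Jt a - Jt b‖ ≤ Lt * ‖a - b‖)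
    (hJr_cont : ContinuousOn (fun q : St × Ctrl => Jr q.1 q.2) (univ ×ˢ ctrlSet Tmax))
    (hJr_lip : ∀ a b c, c ∈ ctrlSet Tmax → ‖Jr a c - Jr b c‖ ≤ Lr * ‖a - b‖)
    (hne : ∀ (r₀ : St) (tf : ℝ) (z₀ : Fin p → ℝ), 0 ≤ tf →
      ∃ r u z, IsTraj f Tmax r₀ tf r u ∧ IsAux Jr tf r u z₀ z)
    (tf : ℝ) (htf : 0 ≤ tf) :
    ∀ (r₀ rhat₀ : St) (z₀ zhat₀ : Fin p → ℝ),
      |auxValueFn f Tmax g ν Jt Jr r₀ tf z₀ - auxValueFn f Tmax g ν Jt Jr rhat₀ tf zhat₀| ≤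
        max (Lg * Real.exp (tf * Lf))
          (max (Lν * Real.exp (tf * Lf))
            (Lt * Real.exp (tf * Lf) + Lr * (Real.exp (tf * Lf) - 1) / Lf)) *
          ‖r₀ - rhat₀‖ + ‖z₀ - zhat₀‖ := by
  intro r₀ rhat₀ z₀ zhat₀
  have h1 := auxValue_le p f Tmax Lf Lg Lν Lt Lr g ν Jt Jr hp hLf hf_bdd hf_lip hg_lip
    hν_lip hJt_lip hJr_cont hJr_lip hne tf htf r₀ rhat₀ z₀ zhat₀
  have h2 := auxValue_le p f Tmax Lf Lg Lν Lt Lr g ν Jt Jr hp hLf hf_bdd hf_lip hg_lip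
    hν_lip hJt_lip hJr_cont hJr_lip hne tf htf rhat₀ r₀ zhat₀ z₀
  rw [norm_sub_rev rhat₀ r₀, norm_sub_rev zhat₀ z₀] at h2
  rw [abs_le]
  constructor <;> linarith
end
end

section
/- (Explicit Hamiltonian) Let m > 0, v_exhaust > 0, T_max ≥ 0 and q₄, q₅, q₆, q₇ ∈ ℝ. Then the minimum over (α, δ, T) ∈ [-π, π] × [-π/2, π/2] × [0, T_max] of (T/m)·( q₄·cos α + sin α·( q₅·sin δ + q₆·cos δ ) ) − q₇·T/v_exhaust equals −max( q₇·T_max/v_exhaust + (T_max/m)·√(q₄² + q₅² + q₆²), 0 ), and the minimum is attained. -/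
open Real Set

set_option maxHeartbeats 1600000 in
/-- Explicit Hamiltonian: the minimum over
(α, δ, T) ∈ [-π, π] × [-π/2, π/2] × [0, T_max] of
(T/m)(q₄ cos α + sin α (q₅ sin δ + q₆ cos δ)) − q₇ T / v_exhaust equals
−max( q₇ T_max / v_exhaust + (T_max/m) √(q₄² + q₅² + q₆²), 0 ), and it is attained. -/
theorem explicit_hamiltonian (m vex Tmax q₄ q₅ q₆ q₇ : ℝ)
    (hm : 0 < m) (hvex : 0 < vex) (hTmax : 0 ≤ Tmax) :
    IsLeast ((fun w : ℝ × ℝ × ℝ =>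
        (w.2.2 / m) * (q₄ * Real.cos w.1 +
          Real.sin w.1 * (q₅ * Real.sin w.2.1 + q₆ * Real.cos w.2.1)) -
          q₇ * w.2.2 / vex) ''
        (Icc (-π) π ×ˢ Icc (-(π / 2)) (π / 2) ×ˢ Icc 0 Tmax))
      (-max (q₇ * Tmax / vex + (Tmax / m) * Real.sqrt (q₄ ^ 2 + q₅ ^ 2 + q₆ ^ 2)) 0) := by
  have hq : (0:ℝ) ≤ q₄^2+q₅^2+q₆^2 := by positivity
  set S := Real.sqrt (q₄^2+q₅^2+q₆^2) with hSdef
  have hS0 : 0 ≤ S := Real.sqrt_nonneg _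
  have hSsq : S^2 = q₄^2+q₅^2+q₆^2 := Real.sq_sqrt hq
  clear_value S
  constructor
  · -- attained
    obtain ⟨α, δ, hα, hδ, hE⟩ : ∃ α δ, α ∈ Icc (-π) π ∧ δ ∈ Icc (-(π/2)) (π/2) ∧
        q₄ * Real.cos α + Real.sin α * (q₅ * Real.sin δ + q₆ * Real.cos δ) = -S := by
      have hq56 : (0:ℝ) ≤ q₅^2+q₆^2 := by positivity
      set r := Real.sqrt (q₅^2+q₆^2) with hrdef
      have hr0 : 0 ≤ r := Real.sqrt_nonneg _
      have hrsq : r^2 = q₅^2+q₆^2 := Real.sq_sqrt hq56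
      clear_value r
      rcases eq_or_lt_of_le hr0 with hr | hr
      · -- q₅ = q₆ = 0
        have h56 : q₅^2 + q₆^2 = 0 := by rw [← hrsq, ← hr]; ring
        have h5 : q₅ = 0 := by nlinarith [sq_nonneg q₅, sq_nonneg q₆]
        have h6 : q₆ = 0 := by nlinarith [sq_nonneg q₅, sq_nonneg q₆]
        have hSabs : S = |q₄| := by
          rw [hSdef, h5, h6]; simp [Real.sqrt_sq_eq_abs]
        refine ⟨if 0 ≤ q₄ then π else 0, 0, ?_, ?_, ?_⟩
        · split_ifs <;> constructor <;> nlinarith [Real.pi_pos]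
        · constructor <;> nlinarith [Real.pi_pos]
        · rw [h5, h6, hSabs]
          split_ifs with h
          · simp [abs_of_nonneg h]
          · simp [abs_of_neg (lt_of_not_ge h)]
      · -- r > 0
        have hSpos : 0 < S := by nlinarith
        obtain ⟨ε, hε1, hεq6⟩ : ∃ ε : ℝ, (ε = 1 ∨ ε = -1) ∧ 0 ≤ ε * q₆ := by
          rcases le_or_gt 0 q₆ with h | h
          · exact ⟨1, Or.inl rfl, by linarith⟩
          · exact ⟨-1, Or.inr rfl, by nlinarith⟩
        have hε2 : ε^2 = 1 := by rcases hε1 with h | h <;> rw [h] <;> ring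
        have hq4S : q₄^2 ≤ S^2 := by nlinarith
        have hq5r : q₅^2 ≤ r^2 := by nlinarith
        have hb : |q₄| ≤ S := by
          rw [← Real.sqrt_sq_eq_abs, ← Real.sqrt_sq hS0]
          exact Real.sqrt_le_sqrt hq4S
        have hb5 : |ε * q₅| ≤ r := by
          rw [← Real.sqrt_sq_eq_abs, ← Real.sqrt_sq hr0]
          refine Real.sqrt_le_sqrt ?_
          have hq5 : (ε * q₅)^2 = q₅^2 := by
            rcases hε1 with h | h <;> rw [h] <;> ring
          linarith
        have h1 : -1 ≤ -q₄ / S := by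
          rw [le_div_iff₀ hSpos]; linarith [le_abs_self q₄]
        have h2 : -q₄ / S ≤ 1 := by
          rw [div_le_one hSpos]; linarith [neg_abs_le q₄]
        have h3 : -1 ≤ ε * q₅ / r := by
          rw [le_div_iff₀ hr]; linarith [neg_abs_le (ε*q₅)]
        have h4 : ε * q₅ / r ≤ 1 := by
          rw [div_le_one hr]; linarith [le_abs_self (ε*q₅)]
        obtain ⟨θ, hθ0, hθπ, hcosθ, hsinθ⟩ : ∃ θ, 0 ≤ θ ∧ θ ≤ π ∧
            Real.cos θ = -q₄ / S ∧ Real.sin θ = r / S := by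
          refine ⟨Real.arccos (-q₄ / S), Real.arccos_nonneg _, Real.arccos_le_pi _,
            Real.cos_arccos h1 h2, ?_⟩
          rw [Real.sin_arccos]
          have heq : 1 - (-q₄ / S)^2 = (r / S)^2 := by
            field_simp
            nlinarith [hSsq, hrsq]
          rw [heq, Real.sqrt_sq (by positivity)]
        refine ⟨-(ε * θ), Real.arcsin (ε * q₅ / r), ?_, Real.arcsin_mem_Icc _, ?_⟩
        · rcases hε1 with h | h <;> rw [h] <;> constructor <;> simp <;> linarith
        · have hsinδ : Real.sin (Real.arcsin (ε * q₅ / r)) = ε * q₅ / r :=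
            Real.sin_arcsin h3 h4
          have hcosδ : Real.cos (Real.arcsin (ε * q₅ / r)) = ε * q₆ / r := by
            rw [Real.cos_arcsin]
            have heq : 1 - (ε * q₅ / r)^2 = (ε * q₆ / r)^2 := by
              field_simp
              nlinarith [hrsq, hε2]
            rw [heq, Real.sqrt_sq (by positivity)]
          have hcosα : Real.cos (-(ε * θ)) = -q₄ / S := by
            rw [Real.cos_neg]
            rcases hε1 with h | h <;> rw [h] <;> simp [hcosθ]
          have hsinα : Real.sin (-(ε * θ)) = -(ε * r / S) := by
            rw [Real.sin_neg]
            rcases hε1 with h | h <;> rw [h] <;> simp [hsinθ] <;> ring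
          rw [hcosα, hsinα, hsinδ, hcosδ]
          field_simp
          linear_combination hSsq - (q₅^2+q₆^2)*hε2
    set A := q₇ * Tmax / vex + Tmax / m * S with hA
    refine ⟨(α, δ, if 0 ≤ A then Tmax else 0), ⟨hα, hδ, ?_⟩, ?_⟩
    · split_ifs
      · exact ⟨hTmax, le_refl _⟩
      · exact ⟨le_refl _, hTmax⟩
    · simp only
      rw [hE]
      split_ifs with h
      · rw [max_eq_left h]; ring
      · rw [max_eq_right (le_of_not_ge h)]; ring
  · -- lower bound
    rintro y ⟨⟨α, δ, T⟩, ⟨hα, hδ, hT⟩, rfl⟩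
    simp only at *
    obtain ⟨hT0, hTm⟩ := hT
    obtain ⟨E, hEdef⟩ : ∃ E, E = q₄ * Real.cos α +
        Real.sin α * (q₅ * Real.sin δ + q₆ * Real.cos δ) := ⟨_, rfl⟩
    rw [← hEdef]
    have hg2 : (q₅ * Real.sin δ + q₆ * Real.cos δ)^2 ≤ q₅^2 + q₆^2 := by
      nlinarith [Real.sin_sq_add_cos_sq δ, sq_nonneg (q₅ * Real.cos δ - q₆ * Real.sin δ),
        sq_nonneg q₅, sq_nonneg q₆]
    have hE2 : E^2 ≤ S^2 := by
      rw [hEdef, hSsq]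
      nlinarith [Real.sin_sq_add_cos_sq α, hg2, sq_nonneg q₄,
        sq_nonneg (q₄ * Real.sin α - (q₅ * Real.sin δ + q₆ * Real.cos δ) * Real.cos α),
        sq_nonneg (q₅ * Real.sin δ + q₆ * Real.cos δ)]
    have hEge : -S ≤ E := by nlinarith [sq_nonneg (E + S), hE2, hS0]
    have hfE : T / m * E - q₇ * T / vex = T * (E / m - q₇ / vex) := by ring
    rw [hfE]
    have hd : -(S / m + q₇ / vex) ≤ E / m - q₇ / vex := by
      have : -S / m ≤ E / m := by gcongr
      have hne : -S / m = -(S/m) := by ring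
      linarith [hne ▸ this]
    have hAts : q₇ * Tmax / vex + Tmax / m * S = Tmax * (S / m + q₇ / vex) := by ring
    rcases le_or_gt 0 (E / m - q₇ / vex) with h | h
    · have h0 : 0 ≤ T * (E / m - q₇ / vex) := mul_nonneg hT0 h
      have : (0:ℝ) ≤ max (q₇ * Tmax / vex + Tmax / m * S) 0 := le_max_right _ _
      linarith
    · have h1 : Tmax * (E / m - q₇ / vex) ≤ T * (E / m - q₇ / vex) :=
        mul_le_mul_of_nonpos_right hTm (le_of_lt h)
      have h2 : Tmax * (-(S / m + q₇ / vex)) ≤ Tmax * (E / m - q₇ / vex) :=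
        mul_le_mul_of_nonneg_left hd hTmax
      have h3 : q₇ * Tmax / vex + Tmax / m * S ≤ max (q₇ * Tmax / vex + Tmax / m * S) 0 :=
        le_max_left _ _
      nlinarith
end
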